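/- Let G be a unified chain graph (UCG) over a finite vertex set V with topologically sorted chain components K_1, …, K_n, and let p = N(0, Σ) be a Gaussian distribution on ℝ^V with Σ positive definite that satisfies Equation 1 (the chain-component factorization) and the zero restrictions of Equations 6–8 with respect to G. Then (Σ⁻¹)_{i,j} = 0 for all i, j ∈ V such that there is no pure collider route in G between i and j. -/

import Mathlib

open Matrix MeasureTheory ProbabilityTheory

attribute [local instance] Classical.propDecidable

noncomputable section

variable {V : Type*}

/-- The submatrix of `S` with rows indexed by `X` and columns indexed by `Y`. -/
def msub (S : Matrix V V ℝ) (X Y : Finset V) : Matrix X Y ℝ :=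
  Matrix.of fun i j => S i.1 j.1

/-- Conditional independence `X ⊥ Y | Z` for a centered Gaussian distribution with
positive definite covariance matrix `S`:  `Σ_{X,Y} − Σ_{X,Z} (Σ_{Z,Z})⁻¹ Σ_{Z,Y} = 0`. -/
def gaussCI [Fintype V] [DecidableEq V] (S : Matrix V V ℝ) (X Y Z : Finset V) : Prop :=
  msub S X Y - msub S X Z * (msub S Z Z)⁻¹ * msub S Z Y = 0

/-- Pairwise disjointness of three sets. -/
def PDisj (X Y Z : Finset V) : Prop :=
  Disjoint X Y ∧ Disjoint X Z ∧ Disjoint Y Z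

/-- Pairwise disjointness of four sets. -/
def PDisj4 (X Y W Z : Finset V) : Prop :=
  Disjoint X Y ∧ Disjoint X W ∧ Disjoint X Z ∧ Disjoint Y W ∧ Disjoint Y Z ∧ Disjoint W Z

/-- A graph with three kinds of edges: undirected (`undir`), solid directed (`solid`,
written `A → B`) and dashed directed (`dashed`, written `A ⇢ B`).  No axioms are imposed. -/
structure PreGraph (V : Type*) where
  undir : V → V → Prop
  solid : V → V → Prop
  dashed : V → V → Prop

namespace PreGraph

variable (G : PreGraph V)

/-- There is an undirected edge between `a` and `b`. -/
def und (a b : V) : Prop := G.undir a b ∨ G.undir b a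

/-- `a` and `b` are adjacent. -/
def adj (a b : V) : Prop :=
  G.und a b ∨ G.solid a b ∨ G.solid b a ∨ G.dashed a b ∨ G.dashed b a

/-- The edge between `a` and `b` is undirected or directed (solid or dashed) from `a` to `b`. -/
def fwd (a b : V) : Prop := G.und a b ∨ G.solid a b ∨ G.dashed a b

/-- A route in `G`: a sequence of nodes `nodes 0, nodes 1, …, nodes len` such that
consecutive nodes are adjacent. -/
structure Route (G : PreGraph V) where
  len : ℕ
  nodes : ℕ → V
  adj_step : ∀ i < len, G.adj (nodes i) (nodes (i + 1))

/-- `c` is a collider node between `a` and `b`:  `a ⇢ c ⇠ b`, `a ⇢ c − b` (in either of the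
two traversal directions) or `a ⇢ c ← b` (in either of the two traversal directions). -/
def colliderTriple (a c b : V) : Prop :=
  (G.dashed a c ∧ G.dashed b c) ∨
  (G.dashed a c ∧ G.und c b) ∨ (G.und a c ∧ G.dashed b c) ∨
  (G.dashed a c ∧ G.solid b c) ∨ (G.solid a c ∧ G.dashed b c)

variable {G} in
/-- The node at position `k` of the route `ρ` is a collider node of `ρ`. -/
def Route.colliderNodeAt (ρ : G.Route) (k : ℕ) : Prop :=
  1 ≤ k ∧ k < ρ.len ∧ G.colliderTriple (ρ.nodes (k - 1)) (ρ.nodes k) (ρ.nodes (k + 1))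

variable {G} in
/-- The positions `p, …, q` of `ρ` form a collider section of `ρ`, i.e. a maximal undirected
subroute `C1 − ⋯ − Cn` of `ρ` such that `A → C1 − ⋯ − Cn ← B` is a subroute of `ρ`. -/
def Route.colliderSectionOcc (ρ : G.Route) (p q : ℕ) : Prop :=
  1 ≤ p ∧ p ≤ q ∧ q + 1 ≤ ρ.len ∧
  (∀ m, p ≤ m → m < q → G.und (ρ.nodes m) (ρ.nodes (m + 1))) ∧
  G.solid (ρ.nodes (p - 1)) (ρ.nodes p) ∧ G.solid (ρ.nodes (q + 1)) (ρ.nodes q)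

variable {G} in
/-- The node at position `k` of `ρ` lies in a collider section of `ρ`. -/
def Route.inColliderSectionAt (ρ : G.Route) (k : ℕ) : Prop :=
  ∃ p q, ρ.colliderSectionOcc p q ∧ p ≤ k ∧ k ≤ q

variable {G} in
/-- The route `ρ` is `Z`-open: (i) all collider nodes are in `Z`, (ii) every collider
section contains some node of `Z`, and (iii) every node which is neither a collider node
nor inside a collider section is outside `Z`. -/
def Route.IsZOpen (ρ : G.Route) (Z : Finset V) : Prop :=
  (∀ k, ρ.colliderNodeAt k → ρ.nodes k ∈ Z) ∧
  (∀ p q, ρ.colliderSectionOcc p q → ∃ m, p ≤ m ∧ m ≤ q ∧ ρ.nodes m ∈ Z) ∧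
  (∀ k ≤ ρ.len, ¬ ρ.colliderNodeAt k → ¬ ρ.inColliderSectionAt k → ρ.nodes k ∉ Z)

variable {G} in
/-- A pure collider route (with at least one edge): every intermediate node is a collider
node or lies in a collider section of the route. -/
def Route.IsPureCollider (ρ : G.Route) : Prop :=
  1 ≤ ρ.len ∧ ∀ k, 0 < k → k < ρ.len → ρ.colliderNodeAt k ∨ ρ.inColliderSectionAt k

/-- Separation `X ⊥_G Y | Z`: there is no `Z`-open route in `G` between a node of `X` and a
node of `Y`. -/
def Sep (X Y Z : Finset V) : Prop :=
  ¬ ∃ ρ : G.Route,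
      ((ρ.nodes 0 ∈ X ∧ ρ.nodes ρ.len ∈ Y) ∨ (ρ.nodes 0 ∈ Y ∧ ρ.nodes ρ.len ∈ X)) ∧
      ρ.IsZOpen Z

section Finite

variable [Fintype V] [DecidableEq V]

/-- The fathers of `X`: nodes `b` with `b → a` in `G` for some `a ∈ X`. -/
def fa (X : Finset V) : Finset V := Finset.univ.filter fun b => ∃ a ∈ X, G.solid b a

/-- The mothers of `X`: nodes `b` with `b ⇢ a` in `G` for some `a ∈ X`. -/
def mo (X : Finset V) : Finset V := Finset.univ.filter fun b => ∃ a ∈ X, G.dashed b a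

/-- The parents of `X`. -/
def pa (X : Finset V) : Finset V := G.fa X ∪ G.mo X

/-- The neighbors of `X`: nodes `b` with `b − a` in `G` for some `a ∈ X`. -/
def nb (X : Finset V) : Finset V := Finset.univ.filter fun b => ∃ a ∈ X, G.und b a

/-- There is a descending route from `a` to `b`: all edges undirected or directed in the
direction of travel, containing at least one directed edge. -/
def descends (a b : V) : Prop :=
  ∃ (n : ℕ) (f : ℕ → V), f 0 = a ∧ f n = b ∧ (∀ i < n, G.fwd (f i) (f (i + 1))) ∧
    ∃ i < n, G.solid (f i) (f (i + 1)) ∨ G.dashed (f i) (f (i + 1))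

/-- The non-descendants of `X`. -/
def nd (X : Finset V) : Finset V := Finset.univ.filter fun b => ¬ ∃ a ∈ X, G.descends a b

/-- Connectivity by undirected routes. -/
def uconn : V → V → Prop := Relation.ReflTransGen G.und

/-- The chain component containing `i`. -/
def cc (i : V) : Finset V := Finset.univ.filter fun j => G.uconn i j

/-- The set of chain components of `G`. -/
def ccs : Finset (Finset V) := Finset.univ.image G.cc

/-- The nodes incident to some edge of `G`. -/
def verts : Finset V := Finset.univ.filter fun a => ∃ b, G.adj a b

/-- `π` is a topological ordering of the chain components: it is constant on components and
increases along directed edges. -/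
def IsTopoOrder (π : V → ℕ) : Prop :=
  (∀ a b, G.uconn a b → π a = π b) ∧ ∀ a b, G.solid a b ∨ G.dashed a b → π a < π b

/-- Equation 1: for every topological ordering of the chain components, each component `K`
is independent of the preceding components minus `Pa(K)` given `Pa(K)`. -/
def eq1 (S : Matrix V V ℝ) : Prop :=
  ∀ π : V → ℕ, G.IsTopoOrder π → ∀ i : V,
    gaussCI S (G.cc i) ((Finset.univ.filter fun b => π b < π i) \ G.pa (G.cc i))
      (G.pa (G.cc i))

/-- The regression coefficients `β_K = Σ_{K,Pa(K)} (Σ_{Pa(K),Pa(K)})⁻¹`. -/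
def beta (S : Matrix V V ℝ) (K : Finset V) : Matrix K (G.pa K) ℝ :=
  msub S K (G.pa K) * (msub S (G.pa K) (G.pa K))⁻¹

/-- The conditional covariance matrix `Λ_K`. -/
def lam (S : Matrix V V ℝ) (K : Finset V) : Matrix K K ℝ :=
  msub S K K - msub S K (G.pa K) * (msub S (G.pa K) (G.pa K))⁻¹ * msub S (G.pa K) K

/-- The precision matrix `Ω = (Σ_{K ∪ Pa(K), K ∪ Pa(K)})⁻¹`. -/
def om (S : Matrix V V ℝ) (K : Finset V) : Matrix ↥(K ∪ G.pa K) ↥(K ∪ G.pa K) ℝ :=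
  (msub S (K ∪ G.pa K) (K ∪ G.pa K))⁻¹

/-- Equation 6: `(β_K)_{i,j} = 0` for all `i ∈ K` and `j ∈ Mo(K) ∖ Mo(i)`. -/
def eq6 (S : Matrix V V ℝ) : Prop :=
  ∀ K ∈ G.ccs, ∀ i (hi : i ∈ K), ∀ j (hj : j ∈ G.pa K),
    j ∈ G.mo K → j ∉ G.mo {i} → G.beta S K ⟨i, hi⟩ ⟨j, hj⟩ = 0

/-- Equation 7: `Ω_{i,j} = 0` for all `i ∈ K` and `j ∈ Fa(K) ∖ Fa(i)`. -/
def eq7 (S : Matrix V V ℝ) : Prop :=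
  ∀ K ∈ G.ccs, ∀ i (hi : i ∈ K), ∀ j (hj : j ∈ G.pa K),
    j ∈ G.fa K → j ∉ G.fa {i} →
    G.om S K ⟨i, Finset.mem_union_left _ hi⟩ ⟨j, Finset.mem_union_right _ hj⟩ = 0

/-- Equation 8: `(Λ_K⁻¹)_{i,j} = 0` for all `i ∈ K` and `j ∈ K ∖ ({i} ∪ Ne(i))`. -/
def eq8 (S : Matrix V V ℝ) : Prop :=
  ∀ K ∈ G.ccs, ∀ i (hi : i ∈ K), ∀ j (hj : j ∈ K),
    j ≠ i → j ∉ G.nb {i} → (G.lam S K)⁻¹ ⟨i, hi⟩ ⟨j, hj⟩ = 0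

/-- `p` satisfies Equation 1 and the zero restrictions of Equations 6–8 w.r.t. `G`. -/
def eqs (S : Matrix V V ℝ) : Prop := G.eq1 S ∧ G.eq6 S ∧ G.eq7 S ∧ G.eq8 S

/-- The global Markov property with respect to `G`, for an abstract ternary
(conditional-independence) relation `I`. -/
def globalMP (I : Finset V → Finset V → Finset V → Prop) : Prop :=
  ∀ X Y Z : Finset V, PDisj X Y Z → G.Sep X Y Z → I X Y Z

/-- The block-recursive Markov property (B1)–(B3) with respect to `G`. -/
def blockRecMP (I : Finset V → Finset V → Finset V → Prop) : Prop :=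
  ∀ K ∈ G.ccs, ∀ i ∈ K,
    I {i} (((G.nd K \ K) \ G.fa K) \ G.mo {i}) (G.fa K ∪ G.mo {i}) ∧
    I {i} (((G.nd K \ K) \ G.fa {i}) \ G.mo K) ((K \ {i}) ∪ G.fa {i} ∪ G.mo K) ∧
    ∀ j ∈ K, j ≠ i → j ∉ G.nb {i} → I {i} {j} ((K \ {i, j}) ∪ G.pa K)

/-- The pairwise Markov property (P1)–(P2) with respect to `G`. -/
def pairwiseMP (I : Finset V → Finset V → Finset V → Prop) : Prop :=
  ∀ i j : V, i ≠ j → ¬ G.adj i j → ∀ K ∈ G.ccs, i ∈ K →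
    (j ∈ ((G.nd {i} \ K) \ G.fa K) \ G.mo {i} → I {i} {j} ((G.nd {i} \ K) \ {j})) ∧
    (j ∈ ((G.nd {i} \ {i}) \ G.fa {i}) \ G.mo K → I {i} {j} (G.nd {i} \ {i, j}))

/-- The local Markov property (L1)–(L2) with respect to `G`. -/
def localMP (I : Finset V → Finset V → Finset V → Prop) : Prop :=
  ∀ K ∈ G.ccs, ∀ i ∈ K,
    I {i} (((G.nd {i} \ K) \ G.fa K) \ G.mo {i}) (G.fa K ∪ G.mo {i}) ∧
    I {i} ((((G.nd {i} \ {i}) \ G.pa {i}) \ G.nb {i}) \ G.mo (G.nb {i}))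
      (G.pa {i} ∪ G.nb {i} ∪ G.mo (G.nb {i}))

/-- The subgraph `G^U`: it keeps the edge `A ⊸ B` (with its type and orientation) iff `G`
has a route `A ⊸ B ⊸ ⋯ ⊸ C` with `C ∈ U`, all edges undirected or directed in the
direction of travel, and no subroute `R ⇢ S − T`. -/
def goodFrom (U : Finset V) (a b : V) : Prop :=
  ∃ (f : ℕ → V) (n : ℕ), 1 ≤ n ∧ f 0 = a ∧ f 1 = b ∧ f n ∈ U ∧
    (∀ i < n, G.fwd (f i) (f (i + 1))) ∧
    ∀ i, i + 2 ≤ n → ¬ (G.dashed (f i) (f (i + 1)) ∧ G.und (f (i + 1)) (f (i + 2)))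

/-- The graph `G^U`. -/
def derived (U : Finset V) : PreGraph V where
  undir a b := G.undir a b ∧ G.goodFrom U a b
  solid a b := G.solid a b ∧ G.goodFrom U a b
  dashed a b := G.dashed a b ∧ G.goodFrom U a b

/-- The set `Y'` used in Lemmas 2 and 3:
`Y' = {B' ∈ V(G^{X∪Y∪Z}) ∖ (X ∪ Z) : X ⊥_{G^{X∪Y∪Z}} B' | Z}`. -/
def derivedYp (X Y Z : Finset V) : Finset V :=
  ((G.derived (X ∪ Y ∪ Z)).verts \ (X ∪ Z)).filter fun b =>
    (G.derived (X ∪ Y ∪ Z)).Sep X {b} Z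

/-- The set `X' = V(G^{X∪Y∪Z}) ∖ (Y' ∪ Z)` used in Lemmas 2 and 3. -/
def derivedXp (X Y Z : Finset V) : Finset V :=
  (G.derived (X ∪ Y ∪ Z)).verts \ (G.derivedYp X Y Z ∪ Z)

end Finite

end PreGraph

/-- A chain graph: at most one edge between any pair of distinct nodes (undirected, solid
directed, or dashed directed) and no semidirected cycles. -/
structure ChainGraph (V : Type*) extends PreGraph V where
  undir_symm : ∀ a b, toPreGraph.undir a b → toPreGraph.undir b a
  undir_irrefl : ∀ a, ¬ toPreGraph.undir a a
  solid_irrefl : ∀ a, ¬ toPreGraph.solid a a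
  dashed_irrefl : ∀ a, ¬ toPreGraph.dashed a a
  undir_not_solid : ∀ a b, toPreGraph.undir a b → ¬ toPreGraph.solid a b
  undir_not_dashed : ∀ a b, toPreGraph.undir a b → ¬ toPreGraph.dashed a b
  solid_not_solid : ∀ a b, toPreGraph.solid a b → ¬ toPreGraph.solid b a
  solid_not_dashed : ∀ a b, toPreGraph.solid a b → ¬ toPreGraph.dashed a b
  solid_not_dashed_rev : ∀ a b, toPreGraph.solid a b → ¬ toPreGraph.dashed b a
  dashed_not_dashed : ∀ a b, toPreGraph.dashed a b → ¬ toPreGraph.dashed b a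
  no_semidirected_cycle : ¬ ∃ (f : ℕ → V) (n : ℕ), 1 ≤ n ∧ f n = f 0 ∧
    (toPreGraph.solid (f 0) (f 1) ∨ toPreGraph.dashed (f 0) (f 1)) ∧
    ∀ i < n, toPreGraph.fwd (f i) (f (i + 1))

namespace ChainGraph

variable (G : ChainGraph V)

/-- An LWF chain graph: no dashed directed edges. -/
def IsLWF : Prop := ∀ a b, ¬ G.toPreGraph.dashed a b

/-- An AMP chain graph: no solid directed edges. -/
def IsAMP : Prop := ∀ a b, ¬ G.toPreGraph.solid a b

/-- A unified chain graph: `Fa(K) ∩ Mo(K) = ∅` for every chain component `K`. -/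
def IsUCG [Fintype V] [DecidableEq V] : Prop :=
  ∀ K ∈ G.toPreGraph.ccs, Disjoint (G.toPreGraph.fa K) (G.toPreGraph.mo K)

end ChainGraph


/-- The AMP chain graph obtained from `G` by deleting every solid directed edge. -/
def ChainGraph.dropSolid (G : ChainGraph V) : ChainGraph V where
  undir := G.toPreGraph.undir
  solid _ _ := False
  dashed := G.toPreGraph.dashed
  undir_symm := G.undir_symm
  undir_irrefl := G.undir_irrefl
  solid_irrefl _ h := h
  dashed_irrefl := G.dashed_irrefl
  undir_not_solid _ _ _ h := h
  undir_not_dashed := G.undir_not_dashed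
  solid_not_solid _ _ h := h.elim
  solid_not_dashed _ _ h := h.elim
  solid_not_dashed_rev _ _ h := h.elim
  dashed_not_dashed := G.dashed_not_dashed
  no_semidirected_cycle := fun ⟨f, n, hn, hcyc, hstart, hsteps⟩ =>
    G.no_semidirected_cycle ⟨f, n, hn, hcyc, Or.inr (hstart.resolve_left id),
      fun i hi => (hsteps i hi).imp id (Or.imp False.elim id)⟩

/-- The restriction of `ω : V → ℝ` to the coordinates in `S`. -/
def marg (S : Finset V) : (V → ℝ) → (S → ℝ) := fun ω s => ω s.1

lemma marg_measurable (S : Finset V) : Measurable (marg (V := V) S) :=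
  measurable_pi_lambda _ fun s => measurable_pi_apply s.1

/-- Conditional independence of the coordinate tuples indexed by `X` and `Y` given the
coordinate tuple indexed by `Z`, for a distribution `μ` on `ℝ^V`. -/
def mCI [Fintype V] (μ : Measure (V → ℝ)) [IsFiniteMeasure μ] (X Y Z : Finset V) : Prop :=
  CondIndepFun (MeasurableSpace.comap (marg Z) inferInstance) ((marg_measurable Z).comap_le)
    (marg X) (marg Y) μ

/-- A probability distribution `μ` on `ℝ^V` satisfies the global Markov property with
respect to `G`. -/
def measGlobalMarkov [Fintype V] [DecidableEq V] (G : PreGraph V) (μ : Measure (V → ℝ))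
    [IsFiniteMeasure μ] : Prop :=
  ∀ X Y Z : Finset V, PDisj X Y Z → G.Sep X Y Z → mCI μ X Y Z

/-- A graphoid over `V`: a ternary relation on pairwise disjoint subsets of `V` satisfying
symmetry, decomposition, weak union, contraction and intersection. -/
structure Graphoid (V : Type*) [DecidableEq V] where
  rel : Finset V → Finset V → Finset V → Prop
  symmetry : ∀ X Y Z : Finset V, PDisj X Y Z → rel X Y Z → rel Y X Z
  decomposition : ∀ X Y W Z : Finset V, PDisj4 X Y W Z → rel X (Y ∪ W) Z → rel X Y Z
  weakUnion : ∀ X Y W Z : Finset V, PDisj4 X Y W Z → rel X (Y ∪ W) Z → rel X Y (Z ∪ W)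
  contraction : ∀ X Y W Z : Finset V, PDisj4 X Y W Z →
    rel X Y (Z ∪ W) → rel X W Z → rel X (Y ∪ W) Z
  intersection : ∀ X Y W Z : Finset V, PDisj4 X Y W Z →
    rel X Y (Z ∪ W) → rel X W (Z ∪ Y) → rel X (Y ∪ W) Z

/-- The conditional variance `Σ_{a,a|B} = Σ_{a,a} − Σ_{a,B} (Σ_{B,B})⁻¹ Σ_{B,a}`. -/
def condVar [Fintype V] [DecidableEq V] (S : Matrix V V ℝ) (a : V) (B : Finset V) : ℝ :=
  S a a - ∑ b₁ : B, ∑ b₂ : B, S a b₁.1 * (msub S B B)⁻¹ b₁ b₂ * S b₂.1 a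

/-! ### Auxiliary lemmas for Lemma 5 -/

namespace Lemma5Aux
set_option linter.unusedSectionVars false

open Finset

variable {V : Type*} [Fintype V] [DecidableEq V]

lemma mem_of_union_not_left {A B W : Finset V} (hW : W = A ∪ B) {a : V}
    (ha : a ∈ W) (haA : a ∉ A) : a ∈ B := by
  subst hW; rcases Finset.mem_union.mp ha with h | h
  · exact absurd h haA
  · exact h

lemma posDef_submatrix_of_injective {n m : Type*} [Fintype n] [Fintype m] [DecidableEq n]
    [DecidableEq m] {S : Matrix n n ℝ} (hS : S.PosDef) (e : m → n)
    (he : Function.Injective e) : (S.submatrix e e).PosDef := by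
  refine Matrix.PosDef.of_dotProduct_mulVec_pos (hS.isHermitian.submatrix e) fun x hx => ?_
  set y : n → ℝ := fun v => ∑ w, if e w = v then x w else 0 with hy
  have hyy : ∀ w, y (e w) = x w := by
    intro w
    rw [hy]
    simp only
    rw [Finset.sum_eq_single w]
    · simp
    · intro w' _ hw'
      simp only [ite_eq_right_iff]
      intro hew
      exact absurd (he hew) hw'
    · simp
  have hyne : y ≠ 0 := by
    intro h0
    obtain ⟨w, hw⟩ := Function.ne_iff.mp hx
    exact hw (by rw [← hyy w, h0]; rfl)
  have key : star x ⬝ᵥ (S.submatrix e e) *ᵥ x = star y ⬝ᵥ S *ᵥ y := by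
    have outer : ∀ g : n → ℝ, ∑ v, y v * g v = ∑ w, x w * g (e w) := by
      intro g
      simp only [hy, Finset.sum_mul, ite_mul, zero_mul]
      rw [Finset.sum_comm]
      refine Finset.sum_congr rfl fun w _ => ?_
      rw [Finset.sum_ite_eq Finset.univ (e w) (fun v => x w * g v)]
      simp
    simp only [dotProduct, mulVec, star_trivial]
    rw [outer (fun v => ∑ v', S v v' * y v')]
    refine Finset.sum_congr rfl fun w _ => ?_
    congr 1
    have inner : ∀ v : n, ∑ v', S v v' * y v' = ∑ w', S v (e w') * x w' := by
      intro v
      simp only [hy, Finset.mul_sum, mul_ite, mul_zero]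
      rw [Finset.sum_comm]
      refine Finset.sum_congr rfl fun w' _ => ?_
      rw [Finset.sum_ite_eq Finset.univ (e w') (fun v' => S v v' * x w')]
      simp
    rw [inner]
    rfl
  rw [key]
  exact hS.dotProduct_mulVec_pos hyne

variable {S : Matrix V V ℝ}

lemma posDef_msub (hS : S.PosDef) (W : Finset V) : (msub S W W).PosDef :=
  posDef_submatrix_of_injective hS (Subtype.val) Subtype.val_injective

lemma Ssym (hS : S.PosDef) (i j : V) : S i j = S j i := by
  have h := hS.isHermitian
  have := congrFun (congrFun h j) i
  simpa using this

lemma msub_transpose (hS : S.PosDef) (X Y : Finset V) :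
    (msub S X Y)ᵀ = msub S Y X := by
  ext i j
  simp [msub, Matrix.transpose_apply, Ssym hS]

noncomputable def invMsub (hS : S.PosDef) (W : Finset V) : Invertible (msub S W W) :=
  Matrix.invertibleOfIsUnitDet _ ((Matrix.isUnit_iff_isUnit_det _).mp (posDef_msub hS W).isUnit)

lemma msub_symm (hS : S.PosDef) (W : Finset V) (x y : ↥W) :
    (msub S W W)⁻¹ x y = (msub S W W)⁻¹ y x := by
  have h : ((msub S W W)⁻¹)ᵀ = (msub S W W)⁻¹ := by
    rw [Matrix.transpose_nonsing_inv, msub_transpose hS]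
  exact (congrFun (congrFun h y) x).symm ▸ rfl


noncomputable def schur (S : Matrix V V ℝ) (A B : Finset V) : Matrix ↥B ↥B ℝ :=
  msub S B B - msub S B A * (msub S A A)⁻¹ * msub S A B

noncomputable def blockEquiv (A B W : Finset V) (hW : W = A ∪ B) (hd : Disjoint A B) :
    ↥A ⊕ ↥B ≃ ↥W where
  toFun x := Sum.elim (fun a => ⟨a.1, hW ▸ Finset.mem_union_left B a.2⟩)
                      (fun b => ⟨b.1, hW ▸ Finset.mem_union_right A b.2⟩) x
  invFun w := if h : w.1 ∈ A then Sum.inl ⟨w.1, h⟩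
              else Sum.inr ⟨w.1, mem_of_union_not_left hW w.2 h⟩
  left_inv := by
    rintro (x | x)
    · simp [x.2]
    · have : x.1 ∉ A := fun h => (Finset.disjoint_left.mp hd h) x.2
      simp [this]
  right_inv := by
    intro w
    by_cases h : w.1 ∈ A <;> simp [h]

lemma blockinv (hS : S.PosDef) (A B W : Finset V) (hW : W = A ∪ B) (hd : Disjoint A B)
    (a b : V) (ha : a ∈ W) (hb : b ∈ W) :
    (msub S W W)⁻¹ ⟨a, ha⟩ ⟨b, hb⟩ =
      if haA : a ∈ A then
        if hbA : b ∈ A then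
          ((msub S A A)⁻¹ + (msub S A A)⁻¹ * msub S A B * (schur S A B)⁻¹ * msub S B A *
            (msub S A A)⁻¹) ⟨a, haA⟩ ⟨b, hbA⟩
        else
          (-((msub S A A)⁻¹ * msub S A B * (schur S A B)⁻¹)) ⟨a, haA⟩
            ⟨b, mem_of_union_not_left hW hb hbA⟩
      else
        if hbA : b ∈ A then
          (-((schur S A B)⁻¹ * msub S B A * (msub S A A)⁻¹)) ⟨a, mem_of_union_not_left hW ha haA⟩
            ⟨b, hbA⟩
        else
          (schur S A B)⁻¹ ⟨a, mem_of_union_not_left hW ha haA⟩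
            ⟨b, mem_of_union_not_left hW hb hbA⟩ := by
  letI iA : Invertible (msub S A A) := invMsub hS A
  letI iW : Invertible (msub S W W) := invMsub hS W
  set e := blockEquiv A B W hW hd with he
  have hFB : (msub S W W).submatrix e e =
      Matrix.fromBlocks (msub S A A) (msub S A B) (msub S B A) (msub S B B) := by
    ext x y
    cases x <;> cases y <;> rfl
  letI iFB : Invertible
      (Matrix.fromBlocks (msub S A A) (msub S A B) (msub S B A) (msub S B B)) := by
    rw [← hFB]; exact Matrix.submatrixEquivInvertible _ e e
  letI iL0 : Invertible (msub S B B - msub S B A * ⅟(msub S A A) * msub S A B) :=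
    Matrix.invertibleOfFromBlocks₁₁Invertible _ _ _ _
  have hA : ⅟(msub S A A) = (msub S A A)⁻¹ := Matrix.invOf_eq_nonsing_inv _
  have hFBinv :
      (Matrix.fromBlocks (msub S A A) (msub S A B) (msub S B A) (msub S B B))⁻¹ =
      Matrix.fromBlocks
        ((msub S A A)⁻¹ + (msub S A A)⁻¹ * msub S A B * (schur S A B)⁻¹ * msub S B A *
          (msub S A A)⁻¹)
        (-((msub S A A)⁻¹ * msub S A B * (schur S A B)⁻¹))
        (-((schur S A B)⁻¹ * msub S B A * (msub S A A)⁻¹))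
        ((schur S A B)⁻¹) := by
    rw [← Matrix.invOf_eq_nonsing_inv, Matrix.invOf_fromBlocks₁₁_eq]
    simp only [Matrix.invOf_eq_nonsing_inv, hA]
    rfl
  have hsub : ((msub S W W)⁻¹).submatrix e e =
      (Matrix.fromBlocks (msub S A A) (msub S A B) (msub S B A) (msub S B B))⁻¹ := by
    rw [← Matrix.inv_submatrix_equiv (msub S W W) e e, hFB]
  have key : ∀ x y : ↥W, (msub S W W)⁻¹ x y =
      ((Matrix.fromBlocks (msub S A A) (msub S A B) (msub S B A) (msub S B B))⁻¹)
        (e.symm x) (e.symm y) := by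
    intro x y
    rw [← hsub]
    simp
  rw [key ⟨a, ha⟩ ⟨b, hb⟩, hFBinv]
  by_cases haA : a ∈ A <;> by_cases hbA : b ∈ A <;>
    simp [he, blockEquiv, haA, hbA]



section Graph

variable (G : ChainGraph V)

lemma rtg_to_fun {α : Type*} {r : α → α → Prop} {x y : α} (h : Relation.ReflTransGen r x y) :
    ∃ (n : ℕ) (f : ℕ → α), f 0 = x ∧ f n = y ∧ ∀ i < n, r (f i) (f (i + 1)) := by
  induction h with
  | refl => exact ⟨0, fun _ => x, rfl, rfl, fun i hi => absurd hi (Nat.not_lt_zero i)⟩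
  | @tail b c hxb hbc ih =>
    obtain ⟨n, f, h0, hn, hs⟩ := ih
    refine ⟨n + 1, fun i => if i ≤ n then f i else c, by simp [h0], by simp, ?_⟩
    intro i hi
    rcases Nat.lt_succ_iff_lt_or_eq.mp hi with hlt | heq
    · have h1 : i ≤ n := le_of_lt hlt
      have h2 : i + 1 ≤ n := hlt
      simp only [h1, h2, if_true]
      exact hs i hlt
    · subst heq
      have h1 : ¬ (i + 1 ≤ i) := by omega
      simp only [le_refl, if_true, h1, if_false]
      rw [hn]
      exact hbc

lemma und_symm {a b : V} (h : G.toPreGraph.und a b) : G.toPreGraph.und b a := h.symm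

lemma uconn_symm {a b : V} (h : G.toPreGraph.uconn a b) : G.toPreGraph.uconn b a := by
  induction h with
  | refl => exact .refl
  | tail _ h2 ih => exact Relation.ReflTransGen.trans (.single (und_symm G h2)) ih

lemma mem_cc {a b : V} : b ∈ G.toPreGraph.cc a ↔ G.toPreGraph.uconn a b := by
  simp [PreGraph.cc]

lemma mem_cc_self (a : V) : a ∈ G.toPreGraph.cc a := (mem_cc G).mpr .refl

lemma cc_eq_of_uconn {a b : V} (h : G.toPreGraph.uconn a b) :
    G.toPreGraph.cc a = G.toPreGraph.cc b := by
  ext x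
  simp only [mem_cc]
  exact ⟨fun hx => Relation.ReflTransGen.trans (uconn_symm G h) hx,
    fun hx => Relation.ReflTransGen.trans h hx⟩

lemma cc_eq_of_mem {K : Finset V} (hK : K ∈ G.toPreGraph.ccs) {a : V} (ha : a ∈ K) :
    K = G.toPreGraph.cc a := by
  obtain ⟨v, _, rfl⟩ := Finset.mem_image.mp hK
  exact cc_eq_of_uconn G ((mem_cc G).mp ha)

lemma cc_mem_ccs (a : V) : G.toPreGraph.cc a ∈ G.toPreGraph.ccs :=
  Finset.mem_image.mpr ⟨a, Finset.mem_univ a, rfl⟩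

lemma no_return {a b : V} (hab : G.toPreGraph.solid a b ∨ G.toPreGraph.dashed a b) :
    ¬ Relation.ReflTransGen G.toPreGraph.fwd b a := by
  intro h
  obtain ⟨n, f, h0, hn, hs⟩ := rtg_to_fun h
  apply G.no_semidirected_cycle
  refine ⟨fun i => if i = 0 then a else f (i - 1), n + 1, by omega, by simp [hn], ?_, ?_⟩
  · simpa [h0] using hab
  · intro i hi
    by_cases hz : i = 0
    · subst hz
      simp only [if_pos rfl, if_neg (Nat.one_ne_zero)]
      rw [show (1 : ℕ) - 1 = 0 from rfl, h0]
      exact Or.inr hab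
    · simp only [if_neg hz, if_neg (Nat.succ_ne_zero i)]
      rw [show i + 1 - 1 = i from rfl]
      have := hs (i - 1) (by omega)
      rwa [Nat.sub_add_cancel (Nat.one_le_iff_ne_zero.mpr hz)] at this

lemma reach_iff_of_uconn {a b : V} (h : G.toPreGraph.uconn a b) (x : V) :
    Relation.ReflTransGen G.toPreGraph.fwd x a ↔
      Relation.ReflTransGen G.toPreGraph.fwd x b := by
  induction h with
  | refl => exact Iff.rfl
  | tail _ h2 ih =>
    exact ih.trans ⟨fun hx => hx.tail (Or.inl h2), fun hx => hx.tail (Or.inl (und_symm G h2))⟩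

noncomputable def reachCard (a : V) : ℕ :=
  (Finset.univ.filter fun x => Relation.ReflTransGen G.toPreGraph.fwd x a).card

lemma reachCard_lt {a b : V} (h : G.toPreGraph.solid a b ∨ G.toPreGraph.dashed a b) :
    reachCard G a < reachCard G b := by
  apply Finset.card_lt_card
  rw [Finset.ssubset_iff_of_subset]
  · refine ⟨b, ?_, ?_⟩
    · simp only [Finset.mem_filter, Finset.mem_univ, true_and]
      exact .refl
    · simp only [Finset.mem_filter, Finset.mem_univ, true_and]
      exact no_return G h
  · intro x hx
    simp only [Finset.mem_filter, Finset.mem_univ, true_and] at hx ⊢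
    exact hx.tail (Or.inr h)

noncomputable def topoPi : V → ℕ := fun a =>
  reachCard G a * Fintype.card (Finset V) + (Fintype.equivFin (Finset V) (G.toPreGraph.cc a)).val

lemma topoPi_const {a b : V} (h : G.toPreGraph.uconn a b) : topoPi G a = topoPi G b := by
  have hf : (Finset.univ.filter fun x => Relation.ReflTransGen G.toPreGraph.fwd x a) =
      (Finset.univ.filter fun x => Relation.ReflTransGen G.toPreGraph.fwd x b) := by
    apply Finset.filter_congr
    intro x _
    first
    | exact reach_iff_of_uconn G h x
    | · simp only [eq_iff_iff]
        exact reach_iff_of_uconn G h x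
  unfold topoPi reachCard
  rw [cc_eq_of_uconn G h, hf]

lemma topoPi_lt {a b : V} (h : G.toPreGraph.solid a b ∨ G.toPreGraph.dashed a b) :
    topoPi G a < topoPi G b := by
  unfold topoPi
  have h1 : reachCard G a < reachCard G b := reachCard_lt G h
  have h2 : (Fintype.equivFin (Finset V) (G.toPreGraph.cc a)).val < Fintype.card (Finset V) :=
    (Fintype.equivFin (Finset V) (G.toPreGraph.cc a)).isLt
  have h3 : (Fintype.equivFin (Finset V) (G.toPreGraph.cc b)).val < Fintype.card (Finset V) :=
    (Fintype.equivFin (Finset V) (G.toPreGraph.cc b)).isLt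
  nlinarith

lemma topoPi_isTopo : G.toPreGraph.IsTopoOrder (topoPi G) :=
  ⟨fun _ _ h => topoPi_const G h, fun _ _ h => topoPi_lt G h⟩

lemma topoPi_cc {a b : V} (h : topoPi G a = topoPi G b) :
    G.toPreGraph.cc a = G.toPreGraph.cc b := by
  unfold topoPi at h
  have h2 : (Fintype.equivFin (Finset V) (G.toPreGraph.cc a)).val < Fintype.card (Finset V) :=
    (Fintype.equivFin (Finset V) (G.toPreGraph.cc a)).isLt
  have h3 : (Fintype.equivFin (Finset V) (G.toPreGraph.cc b)).val < Fintype.card (Finset V) :=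
    (Fintype.equivFin (Finset V) (G.toPreGraph.cc b)).isLt
  have hmod : (Fintype.equivFin (Finset V) (G.toPreGraph.cc a)).val =
      (Fintype.equivFin (Finset V) (G.toPreGraph.cc b)).val := by
    have hm : (reachCard G a * Fintype.card (Finset V) +
        (Fintype.equivFin (Finset V) (G.toPreGraph.cc a)).val) % Fintype.card (Finset V) =
        (reachCard G b * Fintype.card (Finset V) +
        (Fintype.equivFin (Finset V) (G.toPreGraph.cc b)).val) % Fintype.card (Finset V) := by
      rw [h]
    rw [Nat.add_comm (reachCard G a * Fintype.card (Finset V)),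
      Nat.add_comm (reachCard G b * Fintype.card (Finset V)),
      Nat.add_mul_mod_self_right, Nat.add_mul_mod_self_right,
      Nat.mod_eq_of_lt h2, Nat.mod_eq_of_lt h3] at hm
    exact hm
  exact (Fintype.equivFin (Finset V)).injective (Fin.ext hmod)

lemma mem_fa {X : Finset V} {b : V} :
    b ∈ G.toPreGraph.fa X ↔ ∃ a ∈ X, G.toPreGraph.solid b a := by simp [PreGraph.fa]

lemma mem_mo {X : Finset V} {b : V} :
    b ∈ G.toPreGraph.mo X ↔ ∃ a ∈ X, G.toPreGraph.dashed b a := by simp [PreGraph.mo]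

lemma mem_nb {X : Finset V} {b : V} :
    b ∈ G.toPreGraph.nb X ↔ ∃ a ∈ X, G.toPreGraph.und b a := by simp [PreGraph.nb]

lemma mem_pa {X : Finset V} {b : V} :
    b ∈ G.toPreGraph.pa X ↔ (∃ a ∈ X, G.toPreGraph.solid b a) ∨
      (∃ a ∈ X, G.toPreGraph.dashed b a) := by
  simp [PreGraph.pa, mem_fa, mem_mo, Finset.mem_union]

lemma not_mem_cc_of_pa {v p : V} (hp : p ∈ G.toPreGraph.pa (G.toPreGraph.cc v)) :
    p ∉ G.toPreGraph.cc v := by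
  intro hpc
  rw [mem_pa] at hp
  obtain ⟨a, ha, hedge⟩ : ∃ a ∈ G.toPreGraph.cc v,
      G.toPreGraph.solid p a ∨ G.toPreGraph.dashed p a := by
    rcases hp with ⟨a, ha, h⟩ | ⟨a, ha, h⟩
    · exact ⟨a, ha, Or.inl h⟩
    · exact ⟨a, ha, Or.inr h⟩
  have huconn : G.toPreGraph.uconn a p :=
    Relation.ReflTransGen.trans (uconn_symm G ((mem_cc G).mp ha)) ((mem_cc G).mp hpc)
  exact no_return G hedge (Relation.ReflTransGen.mono (r := G.toPreGraph.und) (p := G.toPreGraph.fwd)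
    (fun x y h => Or.inl h) a p huconn)

end Graph


section Routes

variable (G : ChainGraph V)

/-- A pure collider route of length 1 from an edge. -/
lemma route1 {i j : V} (hadj : G.toPreGraph.adj i j) :
    ∃ ρ : G.toPreGraph.Route, ρ.IsPureCollider ∧ ρ.nodes 0 = i ∧ ρ.nodes ρ.len = j := by
  refine ⟨⟨1, fun n => if n = 0 then i else j, ?_⟩, ⟨le_refl 1, ?_⟩, rfl, rfl⟩
  · intro k hk
    have hk0 : k = 0 := by omega
    subst hk0
    exact hadj
  · intro k hk1 hk2
    have hk2' : k < 1 := hk2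
    omega

/-- A pure collider route of length 2 through a collider node. -/
lemma route2 {i c j : V} (h1 : G.toPreGraph.adj i c) (h2 : G.toPreGraph.adj c j)
    (ht : G.toPreGraph.colliderTriple i c j) :
    ∃ ρ : G.toPreGraph.Route, ρ.IsPureCollider ∧ ρ.nodes 0 = i ∧ ρ.nodes ρ.len = j := by
  refine ⟨⟨2, fun n => if n = 0 then i else if n = 1 then c else j, ?_⟩, ⟨?_, ?_⟩, rfl, rfl⟩
  · intro k hk
    have hk' : k < 2 := hk
    have : k = 0 ∨ k = 1 := by omega
    rcases this with hk0 | hk1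
    · subst hk0; exact h1
    · subst hk1; exact h2
  · show 1 ≤ 2
    omega
  · intro k hk1 hk2
    have hk2' : k < 2 := hk2
    have hk' : k = 1 := by omega
    subst hk'
    left
    exact ⟨le_refl 1, Nat.one_lt_two, ht⟩

/-- A pure collider route of length 3 through two collider nodes. -/
lemma route3 {i c d j : V} (h1 : G.toPreGraph.adj i c) (h2 : G.toPreGraph.adj c d)
    (h3 : G.toPreGraph.adj d j) (ht1 : G.toPreGraph.colliderTriple i c d)
    (ht2 : G.toPreGraph.colliderTriple c d j) :
    ∃ ρ : G.toPreGraph.Route, ρ.IsPureCollider ∧ ρ.nodes 0 = i ∧ ρ.nodes ρ.len = j := by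
  refine ⟨⟨3, fun n => if n = 0 then i else if n = 1 then c else if n = 2 then d else j, ?_⟩,
    ⟨?_, ?_⟩, rfl, rfl⟩
  · intro k hk
    have hk' : k < 3 := hk
    have : k = 0 ∨ k = 1 ∨ k = 2 := by omega
    rcases this with hk0 | hk1 | hk2
    · subst hk0; exact h1
    · subst hk1; exact h2
    · subst hk2; exact h3
  · show 1 ≤ 3
    omega
  · intro k hk1 hk2
    have hk2' : k < 3 := hk2
    have : k = 1 ∨ k = 2 := by omega
    rcases this with hk1' | hk2'
    · subst hk1'
      left
      exact ⟨le_refl 1, by show 1 < 3; omega, ht1⟩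
    · subst hk2'
      left
      exact ⟨by omega, by show 2 < 3; omega, ht2⟩

/-- A pure collider route `i → c − ⋯ − d ← j` from cofathers of a chain component. -/
lemma route_fafa {i c d j : V} (hc : G.toPreGraph.solid i c) (hd : G.toPreGraph.solid j d)
    (hcd : G.toPreGraph.uconn c d) :
    ∃ ρ : G.toPreGraph.Route, ρ.IsPureCollider ∧ ρ.nodes 0 = i ∧ ρ.nodes ρ.len = j := by
  obtain ⟨n, f, h0, hn, hs⟩ := rtg_to_fun hcd
  set g : ℕ → V := fun m => if m = 0 then i else if m ≤ n + 1 then f (m - 1) else j with hg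
  have g0 : g 0 = i := by simp [hg]
  have gmid : ∀ m, 1 ≤ m → m ≤ n + 1 → g m = f (m - 1) := by
    intro m hm1 hm2
    simp only [hg]
    rw [if_neg (by omega), if_pos hm2]
  have gend : g (n + 2) = j := by
    simp only [hg]
    rw [if_neg (by omega), if_neg (by omega)]
  have hund : ∀ m, 1 ≤ m → m < n + 1 → G.toPreGraph.und (g m) (g (m + 1)) := by
    intro m hm1 hm2
    rw [gmid m hm1 (by omega), gmid (m + 1) (by omega) (by omega)]
    have := hs (m - 1) (by omega)
    rw [Nat.sub_add_cancel hm1] at this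
    exact this
  refine ⟨⟨n + 2, g, ?_⟩, ⟨?_, ?_⟩, g0, by show g (n + 2) = j; exact gend⟩
  · intro k hk
    have hk' : k < n + 2 := hk
    by_cases hk0 : k = 0
    · subst hk0
      rw [g0, gmid 1 (le_refl 1) (by omega), show (1 : ℕ) - 1 = 0 from rfl, h0]
      exact Or.inr (Or.inl hc)
    · by_cases hk1 : k < n + 1
      · exact Or.inl (hund k (by omega) hk1)
      · have hk2 : k = n + 1 := by omega
        subst hk2
        rw [gmid (n + 1) (by omega) (le_refl _), show n + 1 - 1 = n from rfl, hn,
          show n + 1 + 1 = n + 2 from rfl, gend]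
        exact Or.inr (Or.inr (Or.inl hd))
  · show 1 ≤ n + 2
    omega
  · intro k hk1 hk2
    have hk2' : k < n + 2 := hk2
    right
    refine ⟨1, n + 1, ⟨le_refl 1, by omega, by show n + 1 + 1 ≤ n + 2; omega, ?_, ?_, ?_⟩,
      by omega, by omega⟩
    · intro m hm1 hm2
      exact hund m hm1 hm2
    · show G.toPreGraph.solid (g (1 - 1)) (g 1)
      rw [show (1 : ℕ) - 1 = 0 from rfl, g0, gmid 1 (le_refl 1) (by omega),
        show (1 : ℕ) - 1 = 0 from rfl, h0]
      exact hc
    · show G.toPreGraph.solid (g (n + 1 + 1)) (g (n + 1))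
      rw [show n + 1 + 1 = n + 2 from rfl, gend, gmid (n + 1) (by omega) (le_refl _),
        show n + 1 - 1 = n from rfl, hn]
      exact hd

end Routes


section Core

variable (G : ChainGraph V) (S : Matrix V V ℝ)

lemma sum_subtype_subset {A U : Finset V} (hAU : A ⊆ U) (f : V → ℝ)
    (hf : ∀ v ∈ U, v ∉ A → f v = 0) :
    ∑ u : ↥U, f u.1 = ∑ a : ↥A, f a.1 := by
  rw [Finset.sum_coe_sort U f, Finset.sum_coe_sort A f]
  exact (Finset.sum_subset hAU hf).symm

/-- `β_K Σ_{Pa,Pa} = Σ_{K,Pa}`. -/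
lemma beta_mul (hS : S.PosDef) (K : Finset V) :
    G.toPreGraph.beta S K * msub S (G.toPreGraph.pa K) (G.toPreGraph.pa K) =
      msub S K (G.toPreGraph.pa K) := by
  show msub S K (G.toPreGraph.pa K) * (msub S (G.toPreGraph.pa K) (G.toPreGraph.pa K))⁻¹ *
      msub S (G.toPreGraph.pa K) (G.toPreGraph.pa K) = msub S K (G.toPreGraph.pa K)
  exact Matrix.nonsing_inv_mul_cancel_right _ _
    ((Matrix.isUnit_iff_isUnit_det _).mp (posDef_msub hS (G.toPreGraph.pa K)).isUnit)

lemma lam_eq_schur (K : Finset V) :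
    G.toPreGraph.lam S K = schur S (G.toPreGraph.pa K) K := rfl

lemma lam_transpose (hS : S.PosDef) (K : Finset V) :
    (G.toPreGraph.lam S K)ᵀ = G.toPreGraph.lam S K := by
  unfold PreGraph.lam
  letI := invMsub hS (G.toPreGraph.pa K)
  rw [Matrix.transpose_sub, Matrix.transpose_mul, Matrix.transpose_mul,
    Matrix.transpose_nonsing_inv, msub_transpose hS, msub_transpose hS, msub_transpose hS,
    msub_transpose hS, Matrix.mul_assoc]

lemma lam_inv_symm (hS : S.PosDef) (K : Finset V) (x y : ↥K) :
    (G.toPreGraph.lam S K)⁻¹ x y = (G.toPreGraph.lam S K)⁻¹ y x := by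
  have h : ((G.toPreGraph.lam S K)⁻¹)ᵀ = (G.toPreGraph.lam S K)⁻¹ := by
    rw [Matrix.transpose_nonsing_inv, lam_transpose G S hS]
  exact congrFun (congrFun h y) x

lemma beta_symm (hS : S.PosDef) (K : Finset V) (k : ↥K) (p : ↥(G.toPreGraph.pa K)) :
    ((msub S (G.toPreGraph.pa K) (G.toPreGraph.pa K))⁻¹ * msub S (G.toPreGraph.pa K) K) p k =
      G.toPreGraph.beta S K k p := by
  have h : ((msub S (G.toPreGraph.pa K) (G.toPreGraph.pa K))⁻¹ *
      msub S (G.toPreGraph.pa K) K)ᵀ = G.toPreGraph.beta S K := by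
    rw [Matrix.transpose_mul, Matrix.transpose_nonsing_inv, msub_transpose hS,
      msub_transpose hS]
    rfl
  exact congrFun (congrFun h k) p

lemma pa_disjoint {K : Finset V} (hK : K ∈ G.toPreGraph.ccs) :
    Disjoint (G.toPreGraph.pa K) K := by
  rw [Finset.disjoint_left]
  intro p hp hpK
  obtain ⟨v, _, rfl⟩ := Finset.mem_image.mp hK
  exact not_mem_cc_of_pa G hp hpK

/-- The `(K, Pa K)` block of `Ω` equals `−Λ_K⁻¹ β_K`. -/
lemma om_entry_KP (hS : S.PosDef) {K : Finset V} (hK : K ∈ G.toPreGraph.ccs)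
    {a b : V} (ha : a ∈ K) (hb : b ∈ G.toPreGraph.pa K) :
    G.toPreGraph.om S K ⟨a, Finset.mem_union_left _ ha⟩ ⟨b, Finset.mem_union_right _ hb⟩ =
      -∑ k : ↥K, (G.toPreGraph.lam S K)⁻¹ ⟨a, ha⟩ k * G.toPreGraph.beta S K k ⟨b, hb⟩ := by
  have hd := pa_disjoint G hK
  have hW : K ∪ G.toPreGraph.pa K = G.toPreGraph.pa K ∪ K := Finset.union_comm _ _
  have h := blockinv hS (G.toPreGraph.pa K) K (K ∪ G.toPreGraph.pa K) hW hd a b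
    (Finset.mem_union_left _ ha) (Finset.mem_union_right _ hb)
  have haA : a ∉ G.toPreGraph.pa K := Finset.disjoint_right.mp hd ha
  rw [dif_neg haA, dif_pos hb] at h
  unfold PreGraph.om
  rw [h]
  rw [← lam_eq_schur]
  have hassoc : (G.toPreGraph.lam S K)⁻¹ * msub S K (G.toPreGraph.pa K) *
      (msub S (G.toPreGraph.pa K) (G.toPreGraph.pa K))⁻¹ =
      (G.toPreGraph.lam S K)⁻¹ * G.toPreGraph.beta S K := by
    rw [Matrix.mul_assoc]
    rfl
  rw [hassoc]
  simp [Matrix.neg_apply, Matrix.mul_apply]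

/-- The `M_K` matrices. -/
noncomputable def Mmat (K : Finset V) : V → V → ℝ := fun a b =>
  if ha : a ∈ K then
    if hb : b ∈ K then (G.toPreGraph.lam S K)⁻¹ ⟨a, ha⟩ ⟨b, hb⟩
    else if hb' : b ∈ G.toPreGraph.pa K then
      -∑ k : ↥K, (G.toPreGraph.lam S K)⁻¹ ⟨a, ha⟩ k * G.toPreGraph.beta S K k ⟨b, hb'⟩
    else 0
  else if ha' : a ∈ G.toPreGraph.pa K then
    if hb : b ∈ K then
      -∑ k : ↥K, G.toPreGraph.beta S K k ⟨a, ha'⟩ * (G.toPreGraph.lam S K)⁻¹ k ⟨b, hb⟩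
    else if hb' : b ∈ G.toPreGraph.pa K then
      ∑ k : ↥K, ∑ l : ↥K, G.toPreGraph.beta S K k ⟨a, ha'⟩ * (G.toPreGraph.lam S K)⁻¹ k l *
        G.toPreGraph.beta S K l ⟨b, hb'⟩
    else 0
  else 0

lemma Mmat_zero_right {K : Finset V} {a b : V} (hb : b ∉ K) (hb' : b ∉ G.toPreGraph.pa K) :
    Mmat G S K a b = 0 := by
  unfold Mmat
  by_cases ha : a ∈ K
  · rw [dif_pos ha, dif_neg hb, dif_neg hb']
  · rw [dif_neg ha]
    by_cases ha' : a ∈ G.toPreGraph.pa K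
    · rw [dif_pos ha', dif_neg hb, dif_neg hb']
    · rw [dif_neg ha']

lemma Mmat_zero_left {K : Finset V} {a b : V} (ha : a ∉ K) (ha' : a ∉ G.toPreGraph.pa K) :
    Mmat G S K a b = 0 := by
  unfold Mmat
  rw [dif_neg ha, dif_neg ha']

end Core


section Step

variable (G : ChainGraph V) (S : Matrix V V ℝ)

set_option maxHeartbeats 1000000 in
/-- The inductive step: inverting `Σ_{U∪K,U∪K}` when `K ⊥ U∖Pa(K) | Pa(K)`. -/
lemma step_formula (hS : S.PosDef) {U K W : Finset V} (hW : W = U ∪ K) (hd : Disjoint U K)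
    (hpa : G.toPreGraph.pa K ⊆ U)
    (hCI : gaussCI S K (U \ G.toPreGraph.pa K) (G.toPreGraph.pa K))
    (a b : V) (ha : a ∈ W) (hb : b ∈ W) :
    (msub S W W)⁻¹ ⟨a, ha⟩ ⟨b, hb⟩ =
      (if ha' : a ∈ U then if hb' : b ∈ U then (msub S U U)⁻¹ ⟨a, ha'⟩ ⟨b, hb'⟩ else 0 else 0)
        + Mmat G S K a b := by
  have hUdet : IsUnit (msub S U U).det :=
    (Matrix.isUnit_iff_isUnit_det _).mp (posDef_msub hS U).isUnit
  set bt : Matrix ↥K ↥U ℝ := Matrix.of fun k u =>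
    if h : u.1 ∈ G.toPreGraph.pa K then G.toPreGraph.beta S K k ⟨u.1, h⟩ else 0 with hbt
  have hreg : ∀ (k : ↥K) (u : ↥U),
      S k.1 u.1 = ∑ p : ↥(G.toPreGraph.pa K), G.toPreGraph.beta S K k p * S p.1 u.1 := by
    intro k u
    by_cases hu : u.1 ∈ G.toPreGraph.pa K
    · have h1 : (G.toPreGraph.beta S K *
          msub S (G.toPreGraph.pa K) (G.toPreGraph.pa K)) k ⟨u.1, hu⟩ =
          msub S K (G.toPreGraph.pa K) k ⟨u.1, hu⟩ := by
        rw [beta_mul G S hS K]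
      rw [Matrix.mul_apply] at h1
      exact h1.symm
    · have hmem : u.1 ∈ U \ G.toPreGraph.pa K := Finset.mem_sdiff.mpr ⟨u.2, hu⟩
      have h0 := congrFun (congrFun hCI k) ⟨u.1, hmem⟩
      simp only [Matrix.sub_apply, Matrix.zero_apply, sub_eq_zero] at h0
      have h1 : (msub S K (G.toPreGraph.pa K) *
          (msub S (G.toPreGraph.pa K) (G.toPreGraph.pa K))⁻¹ *
          msub S (G.toPreGraph.pa K) (U \ G.toPreGraph.pa K)) k ⟨u.1, hmem⟩ =
          ∑ p : ↥(G.toPreGraph.pa K), G.toPreGraph.beta S K k p * S p.1 u.1 := by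
        rw [Matrix.mul_apply]
        rfl
      rw [← h1]
      exact h0
  have key1 : msub S K U = bt * msub S U U := by
    ext k u
    rw [Matrix.mul_apply]
    have hsum : ∑ u' : ↥U, bt k u' * msub S U U u' u =
        ∑ p : ↥(G.toPreGraph.pa K),
          (if h : p.1 ∈ G.toPreGraph.pa K then G.toPreGraph.beta S K k ⟨p.1, h⟩ else 0) *
            S p.1 u.1 :=
      sum_subtype_subset hpa
        (fun v => (if h : v ∈ G.toPreGraph.pa K then G.toPreGraph.beta S K k ⟨v, h⟩ else 0) *
          S v u.1)
        (fun v _ hv => by simp [hv])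
    rw [hsum]
    have heach : ∀ p : ↥(G.toPreGraph.pa K),
        (if h : p.1 ∈ G.toPreGraph.pa K then G.toPreGraph.beta S K k ⟨p.1, h⟩ else 0) *
          S p.1 u.1 = G.toPreGraph.beta S K k p * S p.1 u.1 := by
      intro p
      rw [dif_pos p.2]
    rw [Finset.sum_congr rfl fun p _ => heach p]
    exact hreg k u
  have key2 : msub S U K = msub S U U * btᵀ := by
    have h := congrArg Matrix.transpose key1
    rw [msub_transpose hS, Matrix.transpose_mul, msub_transpose hS] at h
    exact h
  have hC : msub S K U * (msub S U U)⁻¹ = bt := by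
    rw [key1]
    exact Matrix.mul_nonsing_inv_cancel_right _ _ hUdet
  have hCt : (msub S U U)⁻¹ * msub S U K = btᵀ := by
    rw [key2]
    exact Matrix.nonsing_inv_mul_cancel_left _ _ hUdet
  have hbt2 : bt * msub S U K = G.toPreGraph.beta S K * msub S (G.toPreGraph.pa K) K := by
    ext k k'
    rw [Matrix.mul_apply, Matrix.mul_apply]
    have hsum : ∑ u' : ↥U, bt k u' * msub S U K u' k' =
        ∑ p : ↥(G.toPreGraph.pa K),
          (if h : p.1 ∈ G.toPreGraph.pa K then G.toPreGraph.beta S K k ⟨p.1, h⟩ else 0) *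
            S p.1 k'.1 :=
      sum_subtype_subset hpa
        (fun v => (if h : v ∈ G.toPreGraph.pa K then G.toPreGraph.beta S K k ⟨v, h⟩ else 0) *
          S v k'.1)
        (fun v _ hv => by simp [hv])
    rw [hsum]
    refine Finset.sum_congr rfl fun p _ => ?_
    rw [dif_pos p.2]
    rfl
  have hL : schur S U K = G.toPreGraph.lam S K := by
    unfold schur
    rw [hC, hbt2]
    unfold PreGraph.lam
    rfl
  have m2 : (msub S U U)⁻¹ * msub S U K * (schur S U K)⁻¹ = btᵀ * (G.toPreGraph.lam S K)⁻¹ := by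
    rw [hCt, hL]
  have m3 : (schur S U K)⁻¹ * msub S K U * (msub S U U)⁻¹ = (G.toPreGraph.lam S K)⁻¹ * bt := by
    rw [Matrix.mul_assoc, hC, hL]
  have m1 : (msub S U U)⁻¹ * msub S U K * (schur S U K)⁻¹ * msub S K U * (msub S U U)⁻¹ =
      btᵀ * (G.toPreGraph.lam S K)⁻¹ * bt := by
    rw [Matrix.mul_assoc, Matrix.mul_assoc, hC, ← Matrix.mul_assoc, m2]
  rw [blockinv hS U K W hW hd a b ha hb]
  by_cases haU : a ∈ U
  · have haK : a ∉ K := Finset.disjoint_left.mp hd haU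
    rw [dif_pos haU, dif_pos haU]
    by_cases hbU : b ∈ U
    · have hbK : b ∉ K := Finset.disjoint_left.mp hd hbU
      rw [dif_pos hbU, dif_pos hbU, Matrix.add_apply]
      congr 1
      have := congrFun (congrFun m1 ⟨a, haU⟩) ⟨b, hbU⟩
      rw [this]
      rw [Matrix.mul_apply]
      by_cases haP : a ∈ G.toPreGraph.pa K
      · by_cases hbP : b ∈ G.toPreGraph.pa K
        · unfold Mmat
          rw [dif_neg haK, dif_pos haP, dif_neg hbK, dif_pos hbP]
          have hterm : ∀ l : ↥K, (btᵀ * (G.toPreGraph.lam S K)⁻¹) ⟨a, haU⟩ l * bt l ⟨b, hbU⟩ =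
              ∑ k : ↥K, G.toPreGraph.beta S K k ⟨a, haP⟩ * (G.toPreGraph.lam S K)⁻¹ k l *
                G.toPreGraph.beta S K l ⟨b, hbP⟩ := by
            intro l
            rw [Matrix.mul_apply, Finset.sum_mul]
            refine Finset.sum_congr rfl fun k _ => ?_
            simp only [hbt, Matrix.transpose_apply, Matrix.of_apply, dif_pos haP, dif_pos hbP]
          rw [Finset.sum_congr rfl fun l _ => hterm l]
          rw [Finset.sum_comm]
        · rw [Mmat_zero_right G S hbK hbP]
          refine Finset.sum_eq_zero fun l _ => ?_
          simp only [hbt, Matrix.of_apply, dif_neg hbP]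
          exact mul_zero _
      · rw [Mmat_zero_left G S haK haP]
        refine Finset.sum_eq_zero fun l _ => ?_
        have : (btᵀ * (G.toPreGraph.lam S K)⁻¹) ⟨a, haU⟩ l = 0 := by
          rw [Matrix.mul_apply]
          refine Finset.sum_eq_zero fun k _ => ?_
          simp only [hbt, Matrix.transpose_apply, Matrix.of_apply, dif_neg haP]
          exact zero_mul _
        rw [this]
        exact zero_mul _
    · have hbK : b ∈ K := mem_of_union_not_left hW hb hbU
      rw [dif_neg hbU, dif_neg hbU]
      rw [zero_add]
      have := congrFun (congrFun m2 ⟨a, haU⟩) (⟨b, hbK⟩ : ↥K)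
      rw [Matrix.neg_apply]
      rw [show (⟨b, mem_of_union_not_left hW hb hbU⟩ : ↥K) = ⟨b, hbK⟩ from rfl, this]
      by_cases haP : a ∈ G.toPreGraph.pa K
      · unfold Mmat
        rw [dif_neg haK, dif_pos haP, dif_pos hbK]
        rw [Matrix.mul_apply, neg_inj]
        refine Finset.sum_congr rfl fun k _ => ?_
        simp only [hbt, Matrix.transpose_apply, Matrix.of_apply, dif_pos haP]
      · rw [Mmat_zero_left G S haK haP, neg_eq_zero]
        rw [Matrix.mul_apply]
        refine Finset.sum_eq_zero fun k _ => ?_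
        simp only [hbt, Matrix.transpose_apply, Matrix.of_apply, dif_neg haP]
        exact zero_mul _
  · have haK : a ∈ K := mem_of_union_not_left hW ha haU
    rw [dif_neg haU, dif_neg haU, zero_add]
    by_cases hbU : b ∈ U
    · have hbK : b ∉ K := Finset.disjoint_left.mp hd hbU
      rw [dif_pos hbU]
      have := congrFun (congrFun m3 (⟨a, haK⟩ : ↥K)) ⟨b, hbU⟩
      rw [Matrix.neg_apply]
      rw [show (⟨a, mem_of_union_not_left hW ha haU⟩ : ↥K) = ⟨a, haK⟩ from rfl, this]
      by_cases hbP : b ∈ G.toPreGraph.pa K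
      · unfold Mmat
        rw [dif_pos haK, dif_neg hbK, dif_pos hbP]
        rw [Matrix.mul_apply, neg_inj]
        refine Finset.sum_congr rfl fun k _ => ?_
        simp only [hbt, Matrix.of_apply, dif_pos hbP]
      · rw [Mmat_zero_right G S hbK hbP, neg_eq_zero]
        rw [Matrix.mul_apply]
        refine Finset.sum_eq_zero fun k _ => ?_
        simp only [hbt, Matrix.of_apply, dif_neg hbP]
        exact mul_zero _
    · have hbK : b ∈ K := mem_of_union_not_left hW hb hbU
      rw [dif_neg hbU]
      have hLi : (schur S U K)⁻¹ = (G.toPreGraph.lam S K)⁻¹ := by rw [hL]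
      have := congrFun (congrFun hLi (⟨a, haK⟩ : ↥K)) (⟨b, hbK⟩ : ↥K)
      rw [show (⟨a, mem_of_union_not_left hW ha haU⟩ : ↥K) = ⟨a, haK⟩ from rfl,
        show (⟨b, mem_of_union_not_left hW hb hbU⟩ : ↥K) = ⟨b, hbK⟩ from rfl, this]
      unfold Mmat
      rw [dif_pos haK, dif_pos hbK]

end Step


section Induction

variable (G : ChainGraph V) (S : Matrix V V ℝ)

set_option maxHeartbeats 1000000 in
lemma inv_eq_sum_Mmat (hS : S.PosDef) (h1 : G.toPreGraph.eq1 S) (i j : V) :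
    S⁻¹ i j = ∑ K ∈ G.toPreGraph.ccs, Mmat G S K i j := by
  have hπ := topoPi_isTopo G
  set π := topoPi G with hπdef
  have claim : ∀ t : ℕ, ∀ W : Finset V, (∀ x, x ∈ W ↔ π x < t) →
      ∀ a b (ha : a ∈ W) (hb : b ∈ W),
        (msub S W W)⁻¹ ⟨a, ha⟩ ⟨b, hb⟩ =
          ∑ K ∈ G.toPreGraph.ccs, if (K : Finset V) ⊆ W then Mmat G S K a b else 0 := by
    intro t
    induction t with
    | zero =>
      intro W hWc a b ha hb
      exact absurd ((hWc a).mp ha) (by omega)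
    | succ t ih =>
      intro W hWc a b ha hb
      by_cases hD : ∀ x, π x ≠ t
      · exact ih W (fun x => (hWc x).trans (by have := hD x; omega)) a b ha hb
      · push_neg at hD
        obtain ⟨i₀, hi₀⟩ := hD
        set U : Finset V := Finset.univ.filter (fun x => π x < t) with hU
        have hUc : ∀ x, x ∈ U ↔ π x < t := by intro x; simp [hU]
        set K₀ : Finset V := G.toPreGraph.cc i₀ with hK₀
        have hK₀c : ∀ x, x ∈ K₀ ↔ π x = t := by
          intro x
          constructor
          · intro hx
            have h2 := hπ.1 i₀ x ((mem_cc G).mp hx)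
            omega
          · intro hx
            have h3 : G.toPreGraph.cc x = G.toPreGraph.cc i₀ :=
              topoPi_cc G (by show π x = π i₀; omega)
            rw [hK₀, ← h3]
            exact mem_cc_self G x
        have hW : W = U ∪ K₀ := by
          ext x
          rw [hWc x, Finset.mem_union, hUc x, hK₀c x]
          omega
        have hd : Disjoint U K₀ := by
          rw [Finset.disjoint_left]
          intro x hx hx'
          rw [hUc x] at hx
          rw [hK₀c x] at hx'
          omega
        have hK₀ccs : K₀ ∈ G.toPreGraph.ccs := cc_mem_ccs G i₀
        have hpaU : ∀ K : Finset V, K ⊆ U → G.toPreGraph.pa K ⊆ U := by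
          intro K hsub p hp
          rw [mem_pa] at hp
          obtain ⟨x, hx, hedge⟩ : ∃ x ∈ K, G.toPreGraph.solid p x ∨ G.toPreGraph.dashed p x := by
            rcases hp with ⟨x, hx, h⟩ | ⟨x, hx, h⟩
            exacts [⟨x, hx, Or.inl h⟩, ⟨x, hx, Or.inr h⟩]
          have h2 := hπ.2 p x hedge
          have h3 := (hUc x).mp (hsub hx)
          exact (hUc p).mpr (by omega)
        have hpa : G.toPreGraph.pa K₀ ⊆ U := by
          intro p hp
          rw [mem_pa] at hp
          obtain ⟨x, hx, hedge⟩ : ∃ x ∈ K₀, G.toPreGraph.solid p x ∨ G.toPreGraph.dashed p x := by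
            rcases hp with ⟨x, hx, h⟩ | ⟨x, hx, h⟩
            exacts [⟨x, hx, Or.inl h⟩, ⟨x, hx, Or.inr h⟩]
          have h2 := hπ.2 p x hedge
          have h3 := (hK₀c x).mp hx
          exact (hUc p).mpr (by omega)
        have hCI : gaussCI S K₀ (U \ G.toPreGraph.pa K₀) (G.toPreGraph.pa K₀) := by
          have hci := h1 π hπ i₀
          have hfil : (Finset.univ.filter fun b => π b < π i₀) = U := by
            rw [hU]
            apply Finset.filter_congr
            intro x _
            simp [hi₀]
          rw [hfil] at hci
          exact hci
        have hstep := step_formula G S hS hW hd hpa hCI a b ha hb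
        rw [hstep]
        have hsplit : ∀ K ∈ G.toPreGraph.ccs,
            (if (K : Finset V) ⊆ W then Mmat G S K a b else 0) =
              (if (K : Finset V) ⊆ U then Mmat G S K a b else 0) +
              (if K = K₀ then Mmat G S K₀ a b else 0) := by
          intro K hK
          by_cases hKK : K = K₀
          · rw [hKK]
            have h1' : K₀ ⊆ W := by rw [hW]; exact Finset.subset_union_right
            have h2' : ¬ K₀ ⊆ U := by
              intro hsub
              have := (hUc i₀).mp (hsub (mem_cc_self G i₀))
              omega
            rw [if_pos h1', if_neg h2', if_pos rfl, zero_add]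
          · have hiff : K ⊆ W ↔ K ⊆ U := by
              constructor
              · intro hs x hx
                have hxW := hs hx
                rw [hWc x] at hxW
                rw [hUc x]
                rcases Nat.lt_succ_iff_lt_or_eq.mp hxW with h | h
                · exact h
                · exfalso
                  apply hKK
                  have hxK₀ : x ∈ K₀ := (hK₀c x).mpr h
                  rw [cc_eq_of_mem G hK hx, hK₀]
                  exact (cc_eq_of_uconn G ((mem_cc G).mp hxK₀)).symm
              · intro hs
                rw [hW]
                exact hs.trans Finset.subset_union_left
            rw [if_neg hKK, add_zero]
            by_cases hsub : K ⊆ W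
            · rw [if_pos hsub, if_pos (hiff.mp hsub)]
            · rw [if_neg hsub, if_neg (fun h => hsub (hiff.mpr h))]
        rw [Finset.sum_congr rfl hsplit, Finset.sum_add_distrib]
        have hlast : ∑ K ∈ G.toPreGraph.ccs, (if K = K₀ then Mmat G S K₀ a b else 0) =
            Mmat G S K₀ a b := by
          rw [Finset.sum_ite_eq' G.toPreGraph.ccs K₀ (fun _ => Mmat G S K₀ a b)]
          rw [if_pos hK₀ccs]
        rw [hlast]
        congr 1
        by_cases haU : a ∈ U
        · by_cases hbU : b ∈ U
          · rw [dif_pos haU, dif_pos hbU]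
            exact ih U hUc a b haU hbU
          · rw [dif_pos haU, dif_neg hbU]
            symm
            refine Finset.sum_eq_zero fun K _ => ?_
            by_cases hsub : K ⊆ U
            · rw [if_pos hsub]
              exact Mmat_zero_right G S (fun h => hbU (hsub h)) (fun h => hbU (hpaU K hsub h))
            · rw [if_neg hsub]
        · rw [dif_neg haU]
          symm
          refine Finset.sum_eq_zero fun K _ => ?_
          by_cases hsub : K ⊆ U
          · rw [if_pos hsub]
            exact Mmat_zero_left G S (fun h => haU (hsub h)) (fun h => haU (hpaU K hsub h))
          · rw [if_neg hsub]
  have hall : ∀ x, x ∈ (Finset.univ : Finset V) ↔ π x < (Finset.univ.sup π) + 1 := by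
    intro x
    simp only [Finset.mem_univ, true_iff]
    exact Nat.lt_succ_of_le (Finset.le_sup (Finset.mem_univ x))
  have h := claim _ Finset.univ hall i j (Finset.mem_univ i) (Finset.mem_univ j)
  have hid : (msub S Finset.univ Finset.univ)⁻¹ ⟨i, Finset.mem_univ i⟩ ⟨j, Finset.mem_univ j⟩ =
      S⁻¹ i j := by
    have hm : msub S Finset.univ Finset.univ =
        S.submatrix (Equiv.subtypeUnivEquiv fun x => Finset.mem_univ x)
          (Equiv.subtypeUnivEquiv fun x => Finset.mem_univ x) := rfl
    rw [hm, Matrix.inv_submatrix_equiv]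
    rfl
  rw [← hid, h]
  refine Finset.sum_congr rfl fun K _ => ?_
  rw [if_pos (Finset.subset_univ K)]

end Induction

end Lemma5Aux
open Lemma5Aux in
/-- **Lemma 5.** If the Gaussian distribution `N(0, Σ)` satisfies Equation 1 and the zero
restrictions of Equations 6–8 with respect to a UCG `G`, then `(Σ⁻¹)_{i,j} = 0` whenever
there is no pure collider route in `G` between the distinct nodes `i` and `j`. -/
theorem precision_zero_of_no_pure_collider_route
    {V : Type*} [Fintype V] [DecidableEq V] (G : ChainGraph V) (hG : G.IsUCG)
    (S : Matrix V V ℝ) (hS : S.PosDef) (h : G.toPreGraph.eqs S) :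
    ∀ i j : V, i ≠ j →
      (¬ ∃ ρ : G.toPreGraph.Route, ρ.IsPureCollider ∧
        ((ρ.nodes 0 = i ∧ ρ.nodes ρ.len = j) ∨ (ρ.nodes 0 = j ∧ ρ.nodes ρ.len = i))) →
      S⁻¹ i j = 0 := by
  intro i j hij hroute
  obtain ⟨heq1, heq6, heq7, heq8⟩ := h
  have noR : ∀ ρ : G.toPreGraph.Route, ρ.IsPureCollider → ρ.nodes 0 = i →
      ρ.nodes ρ.len = j → False :=
    fun ρ hp h0 hl => hroute ⟨ρ, hp, Or.inl ⟨h0, hl⟩⟩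
  -- adjacency constructors
  have adj_solid : ∀ {a b : V}, G.toPreGraph.solid a b → G.toPreGraph.adj a b :=
    fun h => Or.inr (Or.inl h)
  have adj_solid' : ∀ {a b : V}, G.toPreGraph.solid b a → G.toPreGraph.adj a b :=
    fun h => Or.inr (Or.inr (Or.inl h))
  have adj_dashed : ∀ {a b : V}, G.toPreGraph.dashed a b → G.toPreGraph.adj a b :=
    fun h => Or.inr (Or.inr (Or.inr (Or.inl h)))
  have adj_dashed' : ∀ {a b : V}, G.toPreGraph.dashed b a → G.toPreGraph.adj a b :=
    fun h => Or.inr (Or.inr (Or.inr (Or.inr h)))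
  have adj_und : ∀ {a b : V}, G.toPreGraph.und a b → G.toPreGraph.adj a b := fun h => Or.inl h
  -- route-based contradictions
  have noadj : G.toPreGraph.adj i j → False := by
    intro hadj
    obtain ⟨ρ, hp, h0, hl⟩ := route1 G hadj
    exact noR ρ hp h0 hl
  have no2 : ∀ {c : V}, G.toPreGraph.adj i c → G.toPreGraph.adj c j →
      G.toPreGraph.colliderTriple i c j → False := by
    intro c h1 h2 ht
    obtain ⟨ρ, hp, h0, hl⟩ := route2 G h1 h2 ht
    exact noR ρ hp h0 hl
  have no3 : ∀ {c d : V}, G.toPreGraph.adj i c → G.toPreGraph.adj c d →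
      G.toPreGraph.adj d j → G.toPreGraph.colliderTriple i c d →
      G.toPreGraph.colliderTriple c d j → False := by
    intro c d h1 h2 h3 ht1 ht2
    obtain ⟨ρ, hp, h0, hl⟩ := route3 G h1 h2 h3 ht1 ht2
    exact noR ρ hp h0 hl
  have nofafa : ∀ {c d : V}, G.toPreGraph.solid i c → G.toPreGraph.solid j d →
      G.toPreGraph.uconn c d → False := by
    intro c d h1 h2 h3
    obtain ⟨ρ, hp, h0, hl⟩ := route_fafa G h1 h2 h3
    exact noR ρ hp h0 hl
  -- sparsity extraction from Equations 6–8
  have beta_nz : ∀ {K : Finset V}, K ∈ G.toPreGraph.ccs → ∀ (k : ↥K) {x : V}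
      (hx : x ∈ G.toPreGraph.pa K), x ∈ G.toPreGraph.mo K →
      G.toPreGraph.beta S K k ⟨x, hx⟩ ≠ 0 → G.toPreGraph.dashed x k.1 := by
    intro K hK k x hx hxm hne
    by_contra hd
    apply hne
    have hnm : x ∉ G.toPreGraph.mo {k.1} := by
      intro hmem
      rw [mem_mo] at hmem
      obtain ⟨a, ha, hda⟩ := hmem
      rw [Finset.mem_singleton] at ha
      subst ha
      exact hd hda
    exact heq6 K hK k.1 k.2 x hx hxm hnm
  have lam_nz : ∀ {K : Finset V}, K ∈ G.toPreGraph.ccs → ∀ (a b : ↥K),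
      (G.toPreGraph.lam S K)⁻¹ a b ≠ 0 → b.1 = a.1 ∨ G.toPreGraph.und b.1 a.1 := by
    intro K hK a b hne
    by_contra hcon
    push_neg at hcon
    apply hne
    have hnb : b.1 ∉ G.toPreGraph.nb {a.1} := by
      intro hmem
      rw [mem_nb] at hmem
      obtain ⟨c, hc, hu⟩ := hmem
      rw [Finset.mem_singleton] at hc
      subst hc
      exact hcon.2 hu
    exact heq8 K hK a.1 a.2 b.1 b.2 hcon.1 hnb
  have om_nz : ∀ {K : Finset V}, (hK : K ∈ G.toPreGraph.ccs) → ∀ (k : ↥K) {x : V}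
      (hx : x ∈ G.toPreGraph.pa K), x ∈ G.toPreGraph.fa K →
      G.toPreGraph.om S K ⟨k.1, Finset.mem_union_left _ k.2⟩ ⟨x, Finset.mem_union_right _ hx⟩ ≠ 0 →
      G.toPreGraph.solid x k.1 := by
    intro K hK k x hx hxf hne
    by_contra hs
    apply hne
    have hnf : x ∉ G.toPreGraph.fa {k.1} := by
      intro hmem
      rw [mem_fa] at hmem
      obtain ⟨a, ha, hsa⟩ := hmem
      rw [Finset.mem_singleton] at ha
      subst ha
      exact hs hsa
    exact heq7 K hK k.1 k.2 x hx hxf hnf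
  rw [inv_eq_sum_Mmat G S hS heq1 i j]
  refine Finset.sum_eq_zero fun K hK => ?_
  unfold Mmat
  by_cases hiK : i ∈ K
  · rw [dif_pos hiK]
    by_cases hjK : j ∈ K
    · rw [dif_pos hjK]
      have hjnb : j ∉ G.toPreGraph.nb {i} := by
        intro hmem
        rw [mem_nb] at hmem
        obtain ⟨c, hc, hu⟩ := hmem
        rw [Finset.mem_singleton] at hc
        subst hc
        exact noadj (adj_und (und_symm G hu))
      exact heq8 K hK i hiK j hjK (Ne.symm hij) hjnb
    · rw [dif_neg hjK]
      by_cases hjP : j ∈ G.toPreGraph.pa K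
      · rw [dif_pos hjP]
        by_cases hjF : j ∈ G.toPreGraph.fa K
        · have hjnf : j ∉ G.toPreGraph.fa {i} := by
            intro hmem
            rw [mem_fa] at hmem
            obtain ⟨c, hc, hsc⟩ := hmem
            rw [Finset.mem_singleton] at hc
            subst hc
            exact noadj (adj_solid' hsc)
          rw [← om_entry_KP G S hS hK hiK hjP]
          exact heq7 K hK i hiK j hjP hjF hjnf
        · have hjM : j ∈ G.toPreGraph.mo K :=
            (Finset.mem_union.mp (show j ∈ G.toPreGraph.fa K ∪ G.toPreGraph.mo K from hjP)).resolve_left hjF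
          rw [neg_eq_zero]
          refine Finset.sum_eq_zero fun k _ => ?_
          by_cases hbkj : G.toPreGraph.beta S K k ⟨j, hjP⟩ = 0
          · rw [hbkj, mul_zero]
          have hdjk := beta_nz hK k hjP hjM hbkj
          by_cases hlik : (G.toPreGraph.lam S K)⁻¹ ⟨i, hiK⟩ k = 0
          · rw [hlik, zero_mul]
          exfalso
          rcases lam_nz hK ⟨i, hiK⟩ k hlik with heqk | hund
          · apply noadj
            apply adj_dashed'
            rw [show i = (k : V) from heqk.symm]
            exact hdjk
          · exact no2 (adj_und (und_symm G hund)) (adj_dashed' hdjk)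
              (Or.inr (Or.inr (Or.inl ⟨und_symm G hund, hdjk⟩)))
      · rw [dif_neg hjP]
  · rw [dif_neg hiK]
    by_cases hiP : i ∈ G.toPreGraph.pa K
    · rw [dif_pos hiP]
      by_cases hjK : j ∈ K
      · rw [dif_pos hjK]
        by_cases hiF : i ∈ G.toPreGraph.fa K
        · rw [neg_eq_zero]
          have hinf : i ∉ G.toPreGraph.fa {j} := by
            intro hmem
            rw [mem_fa] at hmem
            obtain ⟨c, hc, hsc⟩ := hmem
            rw [Finset.mem_singleton] at hc
            subst hc
            exact noadj (adj_solid hsc)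
          have hom0 := heq7 K hK j hjK i hiP hiF hinf
          rw [om_entry_KP G S hS hK hjK hiP, neg_eq_zero] at hom0
          calc ∑ k : ↥K, G.toPreGraph.beta S K k ⟨i, hiP⟩ * (G.toPreGraph.lam S K)⁻¹ k ⟨j, hjK⟩
              = ∑ k : ↥K, (G.toPreGraph.lam S K)⁻¹ ⟨j, hjK⟩ k * G.toPreGraph.beta S K k ⟨i, hiP⟩ :=
                Finset.sum_congr rfl fun k _ => by rw [mul_comm, lam_inv_symm G S hS]
            _ = 0 := hom0
        · have hiM : i ∈ G.toPreGraph.mo K :=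
            (Finset.mem_union.mp (show i ∈ G.toPreGraph.fa K ∪ G.toPreGraph.mo K from hiP)).resolve_left hiF
          rw [neg_eq_zero]
          refine Finset.sum_eq_zero fun k _ => ?_
          by_cases hbki : G.toPreGraph.beta S K k ⟨i, hiP⟩ = 0
          · rw [hbki, zero_mul]
          have hdik := beta_nz hK k hiP hiM hbki
          by_cases hlkj : (G.toPreGraph.lam S K)⁻¹ k ⟨j, hjK⟩ = 0
          · rw [hlkj, mul_zero]
          exfalso
          rcases lam_nz hK k ⟨j, hjK⟩ hlkj with heqk | hund
          · apply noadj
            apply adj_dashed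
            rw [show j = (k : V) from heqk]
            exact hdik
          · have hund' : G.toPreGraph.und (k : V) j :=
              und_symm G (show G.toPreGraph.und j (k : V) from hund)
            exact no2 (adj_dashed hdik) (adj_und hund')
              (Or.inr (Or.inl ⟨hdik, hund'⟩))
      · rw [dif_neg hjK]
        by_cases hjP : j ∈ G.toPreGraph.pa K
        · rw [dif_pos hjP]
          by_cases hiF : i ∈ G.toPreGraph.fa K
          · by_cases hjF : j ∈ G.toPreGraph.fa K
            · -- both fathers: a pure collider route always exists
              exfalso
              rw [mem_fa] at hiF hjF
              obtain ⟨c, hcK, hsc⟩ := hiF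
              obtain ⟨d, hdK, hsd⟩ := hjF
              have hKc : K = G.toPreGraph.cc c := cc_eq_of_mem G hK hcK
              rw [hKc] at hdK
              exact nofafa hsc hsd ((mem_cc G).mp hdK)
            · have hjM : j ∈ G.toPreGraph.mo K :=
                (Finset.mem_union.mp (show j ∈ G.toPreGraph.fa K ∪ G.toPreGraph.mo K from hjP)).resolve_left hjF
              rw [Finset.sum_comm]
              refine Finset.sum_eq_zero fun l _ => ?_
              rw [← Finset.sum_mul]
              by_cases hblj : G.toPreGraph.beta S K l ⟨j, hjP⟩ = 0
              · rw [hblj, mul_zero]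
              have hdjl := beta_nz hK l hjP hjM hblj
              have hsum0 : ∑ k : ↥K, G.toPreGraph.beta S K k ⟨i, hiP⟩ *
                  (G.toPreGraph.lam S K)⁻¹ k l = 0 := by
                by_contra hne
                have hom : G.toPreGraph.om S K ⟨l.1, Finset.mem_union_left _ l.2⟩
                    ⟨i, Finset.mem_union_right _ hiP⟩ ≠ 0 := by
                  rw [om_entry_KP G S hS hK l.2 hiP]
                  rw [show ∑ k : ↥K, (G.toPreGraph.lam S K)⁻¹ (⟨l.1, l.2⟩ : ↥K) k *
                      G.toPreGraph.beta S K k ⟨i, hiP⟩ =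
                      ∑ k : ↥K, G.toPreGraph.beta S K k ⟨i, hiP⟩ *
                      (G.toPreGraph.lam S K)⁻¹ k l from
                    Finset.sum_congr rfl fun k _ => by rw [mul_comm, lam_inv_symm G S hS]]
                  exact neg_ne_zero.mpr hne
                have hsil : G.toPreGraph.solid i l.1 := om_nz hK l hiP hiF hom
                exact no2 (adj_solid hsil) (adj_dashed' hdjl)
                  (Or.inr (Or.inr (Or.inr (Or.inr ⟨hsil, hdjl⟩))))
              rw [hsum0, zero_mul]
          · have hiM : i ∈ G.toPreGraph.mo K :=
              (Finset.mem_union.mp (show i ∈ G.toPreGraph.fa K ∪ G.toPreGraph.mo K from hiP)).resolve_left hiF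
            by_cases hjF : j ∈ G.toPreGraph.fa K
            · refine Finset.sum_eq_zero fun k _ => ?_
              have hassoc : ∀ l : ↥K, G.toPreGraph.beta S K k ⟨i, hiP⟩ *
                  (G.toPreGraph.lam S K)⁻¹ k l * G.toPreGraph.beta S K l ⟨j, hjP⟩ =
                  G.toPreGraph.beta S K k ⟨i, hiP⟩ * ((G.toPreGraph.lam S K)⁻¹ k l *
                  G.toPreGraph.beta S K l ⟨j, hjP⟩) := fun l => mul_assoc _ _ _
              rw [Finset.sum_congr rfl fun l _ => hassoc l, ← Finset.mul_sum]
              by_cases hbki : G.toPreGraph.beta S K k ⟨i, hiP⟩ = 0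
              · rw [hbki, zero_mul]
              have hdik := beta_nz hK k hiP hiM hbki
              have hsum0 : ∑ l : ↥K, (G.toPreGraph.lam S K)⁻¹ k l *
                  G.toPreGraph.beta S K l ⟨j, hjP⟩ = 0 := by
                by_contra hne
                have hom : G.toPreGraph.om S K ⟨k.1, Finset.mem_union_left _ k.2⟩
                    ⟨j, Finset.mem_union_right _ hjP⟩ ≠ 0 := by
                  rw [om_entry_KP G S hS hK k.2 hjP]
                  exact neg_ne_zero.mpr hne
                have hsjk : G.toPreGraph.solid j k.1 := om_nz hK k hjP hjF hom
                exact no2 (adj_dashed hdik) (adj_solid' hsjk)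
                  (Or.inr (Or.inr (Or.inr (Or.inl ⟨hdik, hsjk⟩))))
              rw [hsum0, mul_zero]
            · have hjM : j ∈ G.toPreGraph.mo K :=
                (Finset.mem_union.mp (show j ∈ G.toPreGraph.fa K ∪ G.toPreGraph.mo K from hjP)).resolve_left hjF
              refine Finset.sum_eq_zero fun k _ => ?_
              refine Finset.sum_eq_zero fun l _ => ?_
              by_cases hbki : G.toPreGraph.beta S K k ⟨i, hiP⟩ = 0
              · rw [hbki, zero_mul, zero_mul]
              by_cases hblj : G.toPreGraph.beta S K l ⟨j, hjP⟩ = 0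
              · rw [hblj, mul_zero]
              have hdik := beta_nz hK k hiP hiM hbki
              have hdjl := beta_nz hK l hjP hjM hblj
              by_cases hll : (G.toPreGraph.lam S K)⁻¹ k l = 0
              · rw [hll, mul_zero, zero_mul]
              exfalso
              rcases lam_nz hK k l hll with heqk | hund
              · have hdjk : G.toPreGraph.dashed j k.1 := by rw [← heqk]; exact hdjl
                exact no2 (adj_dashed hdik) (adj_dashed' hdjk) (Or.inl ⟨hdik, hdjk⟩)
              · exact no3 (adj_dashed hdik) (adj_und (und_symm G hund)) (adj_dashed' hdjl)
                  (Or.inr (Or.inl ⟨hdik, und_symm G hund⟩))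
                  (Or.inr (Or.inr (Or.inl ⟨und_symm G hund, hdjl⟩)))
        · rw [dif_neg hjP]
    · rw [dif_neg hiP]
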